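/- Let β > 0, σ₀ > 0, σ_ε > 0 and p ∈ (0,1], and define f : [1,∞) → ℝ by f(φ) := (βσ₀/√φ)(1 − p(φ−1)/2) + √(β²σ₀²/φ + σ_ε²) · p(φ−1)/2. Then f attains its minimum over [1,∞), and the minimizer φ₀ ∈ [1,∞) is unique. -/

import Mathlib

noncomputable def pS (a c φ : ℝ) : ℝ := Real.sqrt (a^2 + c*φ)
noncomputable def pA (a c φ : ℝ) : ℝ := 2*c*φ^2 + a^2*φ + a^2
noncomputable def pB (p φ : ℝ) : ℝ := 1 + p*(φ+1)/2
noncomputable def pG (a c p φ : ℝ) : ℝ := p * pA a c φ / (2*(pS a c φ * pB p φ))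
noncomputable def pF (a c p φ : ℝ) : ℝ :=
  a/Real.sqrt φ * (1 - p*(φ-1)/2) + Real.sqrt (a^2/φ + c) * (p*(φ-1)/2)
noncomputable def pD (a c p φ : ℝ) : ℝ :=
  (p * (4*c*φ + a^2) * (2*(pS a c φ * pB p φ)) -
    p * pA a c φ * (2*(c / (2 * pS a c φ) * pB p φ + pS a c φ * (p/2)))) /
    (2*(pS a c φ * pB p φ))^2

lemma pS_pos {a c : ℝ} (ha : 0 < a) (hc : 0 < c) {φ : ℝ} (hφ : 0 < φ) :
    0 < pS a c φ := Real.sqrt_pos.2 (by positivity)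

lemma pS_sq {a c : ℝ} (ha : 0 < a) (hc : 0 < c) {φ : ℝ} (hφ : 0 < φ) :
    (pS a c φ)^2 = a^2 + c*φ := Real.sq_sqrt (by positivity)

lemma pB_pos {p : ℝ} (hp : 0 < p) {φ : ℝ} (hφ : 0 < φ) : 0 < pB p φ := by
  unfold pB; nlinarith

lemma hasDerivAt_pS {a c : ℝ} (ha : 0 < a) (hc : 0 < c) {φ : ℝ} (hφ : 0 < φ) :
    HasDerivAt (pS a c) (c / (2 * pS a c φ)) φ := by
  have h1 : HasDerivAt (fun φ : ℝ => a^2 + c*φ) c φ := by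
    simpa using ((hasDerivAt_id φ).const_mul c).const_add (a^2)
  have h2 := (Real.hasDerivAt_sqrt (x := a^2 + c*φ) (by positivity)).comp φ h1
  exact h2.congr_deriv (by unfold pS; ring)

lemma hasDerivAt_pG {a c p : ℝ} (ha : 0 < a) (hc : 0 < c) (hp : 0 < p) {φ : ℝ} (hφ : 0 < φ) :
    HasDerivAt (pG a c p) (pD a c p φ) φ := by
  have hnum : HasDerivAt (fun φ => p * pA a c φ) (p * (4*c*φ + a^2)) φ := by
    unfold pA
    have h1 : HasDerivAt (fun φ : ℝ => φ^2) (2*φ) φ := by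
      simpa using hasDerivAt_pow 2 φ
    have := (((h1.const_mul (2*c)).add ((hasDerivAt_id φ).const_mul (a^2))).add_const
      (a^2)).const_mul p
    exact this.congr_deriv (by ring)
  have hB : HasDerivAt (pB p) (p/2) φ := by
    unfold pB
    have h2 := ((((hasDerivAt_id φ).add_const 1).const_mul p).div_const 2).const_add 1
    exact h2.congr_deriv (by ring)
  have hden : HasDerivAt (fun φ => 2*(pS a c φ * pB p φ))
      (2*(c / (2 * pS a c φ) * pB p φ + pS a c φ * (p/2))) φ :=
    ((hasDerivAt_pS ha hc hφ).mul hB).const_mul 2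
  have hden0 : 2*(pS a c φ * pB p φ) ≠ 0 := by
    have := pS_pos ha hc hφ; have := pB_pos hp hφ; positivity
  exact hnum.div hden hden0

lemma pD_pos {a c p : ℝ} (ha : 0 < a) (hc : 0 < c) (hp : 0 < p)
    {φ : ℝ} (hφ : 1 ≤ φ) : 0 < pD a c p φ := by
  have hφ0 : (0:ℝ) < φ := lt_of_lt_of_le one_pos hφ
  have hs := pS_pos ha hc hφ0
  have hsq := pS_sq ha hc hφ0
  have hb := pB_pos hp hφ0
  set s := pS a c φ with hsdef
  unfold pD
  rw [← hsdef]
  apply div_pos _ (by positivity)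
  have hN : 0 < (4*c*φ + a^2)*(a^2+c*φ)*pB p φ -
      pA a c φ*(c/2*pB p φ + (a^2+c*φ)*(p/2)) := by
    unfold pA pB
    have h1 : 0 ≤ a^2*c*(φ-1) := by
      apply mul_nonneg (by positivity); linarith
    have h2 : 0 ≤ p*(a^2*c*(φ-1)) := mul_nonneg hp.le h1
    have h4 : 0 < a^2*c := by positivity
    have h5 : 0 < p*(a^2*c) := by positivity
    have h6 : 0 < c^2*φ^2 := by positivity
    have h7 : 0 ≤ p*(c^2*(φ^3+3*φ^2)) := by positivity
    have h8 : 0 ≤ p*(a^2*c*φ^2) := by positivity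
    nlinarith [h1, h2, h4, h5, h6, h7, h8]
  have e0 : c/(2*s)*s = c/2 := by field_simp
  have key : (p * (4*c*φ + a^2) * (2*(s * pB p φ)) -
      p * pA a c φ * (2*(c / (2 * s) * pB p φ + s * (p/2)))) * s =
      2*p*((4*c*φ + a^2)*(a^2+c*φ)*pB p φ -
        pA a c φ*(c/2*pB p φ + (a^2+c*φ)*(p/2))) := by
    calc (p * (4*c*φ + a^2) * (2*(s * pB p φ)) -
        p * pA a c φ * (2*(c / (2 * s) * pB p φ + s * (p/2)))) * s
        = p * (4*c*φ + a^2) * 2 * pB p φ * s^2 -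
          p * pA a c φ * 2 * ((c/(2*s)*s) * pB p φ + (p/2) * s^2) := by ring
      _ = _ := by rw [e0, hsq]; ring
  have hpos : 0 < (p * (4*c*φ + a^2) * (2*(s * pB p φ)) -
      p * pA a c φ * (2*(c / (2 * s) * pB p φ + s * (p/2)))) * s := by
    rw [key]; exact mul_pos (by positivity) hN
  by_contra h
  push_neg at h
  nlinarith [hpos, hs, h]

lemma pF_deriv_eq (a c p x s : ℝ) (hx0 : 0 < x) (hs0 : 0 < s) (hp : 0 < p)
    (hs : s*s = a^2 + c*x^2) :
    ((0*x - a*(1/(2*x)))/x^2) * (1 - p*(x^2-1)/2) + a/x * (-(p*1/2))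
    + ((1/(2*(s/x)) * ((0*(x^2) - a^2*1)/(x^2)^2)) * (p*(x^2-1)/2) + (s/x)*(p*1/2))
    = (1 + p*(x^2+1)/2) * (p*(2*c*(x^2)^2 + a^2*(x^2) + a^2)/(2*(s*(1 + p*(x^2+1)/2))) - a)
      / (2*(x^2)*x) := by
  have hB : 0 < 1 + p*(x^2+1)/2 := by nlinarith [sq_nonneg x]
  calc ((0*x - a*(1/(2*x)))/x^2) * (1 - p*(x^2-1)/2) + a/x * (-(p*1/2))
      + ((1/(2*(s/x)) * ((0*(x^2) - a^2*1)/(x^2)^2)) * (p*(x^2-1)/2) + (s/x)*(p*1/2))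
      = (-(a)*(1 - p*(x^2-1)/2))/(2*x^3) - a*p/(2*x)
        - a^2*(p*(x^2-1))*x/(4*s*x^4) + (s*s)*(p/(2*x*s)) := by
        field_simp; ring
    _ = (-(a)*(1 - p*(x^2-1)/2))/(2*x^3) - a*p/(2*x)
        - a^2*(p*(x^2-1))*x/(4*s*x^4) + (a^2 + c*x^2)*(p/(2*x*s)) := by rw [hs]
    _ = _ := by field_simp; ring

lemma hasDerivAt_pF {a c p : ℝ} (ha : 0 < a) (hc : 0 < c) (hp : 0 < p)
    {φ : ℝ} (hφ : 0 < φ) :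
    HasDerivAt (pF a c p) (pB p φ * (pG a c p φ - a) / (2*φ*Real.sqrt φ)) φ := by
  have hx0 : 0 < Real.sqrt φ := Real.sqrt_pos.2 hφ
  have hu0 : 0 < a^2/φ + c := by positivity
  have hsq' : HasDerivAt (fun y : ℝ => Real.sqrt y) (1/(2*Real.sqrt φ)) φ :=
    Real.hasDerivAt_sqrt hφ.ne'
  have h1 : HasDerivAt (fun y : ℝ => a / Real.sqrt y)
      ((0 * Real.sqrt φ - a * (1/(2*Real.sqrt φ))) / (Real.sqrt φ)^2) φ :=
    (hasDerivAt_const φ a).div hsq' hx0.ne'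
  have hlin2 : HasDerivAt (fun y : ℝ => p*(y-1)/2) (p*1/2) φ :=
    (((hasDerivAt_id φ).sub_const 1).const_mul p).div_const 2
  have hlin1 : HasDerivAt (fun y : ℝ => 1 - p*(y-1)/2) (-(p*1/2)) φ := hlin2.const_sub 1
  have hu : HasDerivAt (fun y : ℝ => a^2/y + c) ((0*φ - a^2*1)/φ^2) φ :=
    ((hasDerivAt_const φ (a^2)).div (hasDerivAt_id φ) hφ.ne').add_const c
  have hs' : HasDerivAt (fun y : ℝ => Real.sqrt (a^2/y + c))
      (1/(2*Real.sqrt (a^2/φ + c)) * ((0*φ - a^2*1)/φ^2)) φ :=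
    (Real.hasDerivAt_sqrt hu0.ne').comp φ hu
  have total := (h1.mul hlin1).add (hs'.mul hlin2)
  have hxsq : Real.sqrt φ ^ 2 = φ := Real.sq_sqrt hφ.le
  have hssq : pS a c φ * pS a c φ = a^2 + c * Real.sqrt φ ^ 2 := by
    rw [hxsq, ← sq]; exact pS_sq ha hc hφ
  have hq : Real.sqrt (a^2/φ + c) = pS a c φ / Real.sqrt φ := by
    unfold pS
    rw [show a^2/φ + c = (a^2 + c*φ)/φ by field_simp]
    exact Real.sqrt_div (by positivity) φ
  have heq := pF_deriv_eq a c p (Real.sqrt φ) (pS a c φ) hx0 (pS_pos ha hc hφ) hp hssq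
  rw [hxsq] at heq
  refine total.congr_deriv ?_
  rw [hq]
  unfold pG pA pB
  rw [← heq, hxsq]

lemma pG_contOn {a c p : ℝ} (ha : 0 < a) (hc : 0 < c) (hp : 0 < p) :
    ContinuousOn (pG a c p) (Set.Ici 1) := fun x hx =>
  ((hasDerivAt_pG ha hc hp (lt_of_lt_of_le one_pos hx)).continuousAt).continuousWithinAt

lemma pF_contOn {a c p : ℝ} (ha : 0 < a) (hc : 0 < c) (hp : 0 < p) :
    ContinuousOn (pF a c p) (Set.Ici 1) := fun x hx =>
  ((hasDerivAt_pF ha hc hp (lt_of_lt_of_le one_pos hx)).continuousAt).continuousWithinAt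

lemma pG_strictMonoOn {a c p : ℝ} (ha : 0 < a) (hc : 0 < c) (hp : 0 < p) :
    StrictMonoOn (pG a c p) (Set.Ici 1) := by
  apply strictMonoOn_of_deriv_pos (convex_Ici 1) (pG_contOn ha hc hp)
  intro x hx
  rw [interior_Ici] at hx
  have hx1 : (1:ℝ) < x := hx
  rw [(hasDerivAt_pG ha hc hp (lt_trans one_pos hx1)).deriv]
  exact pD_pos ha hc hp hx1.le

lemma pG_exists_big {a c p : ℝ} (ha : 0 < a) (hc : 0 < c) (hp : 0 < p) (hp1 : p ≤ 1) :
    ∃ T, 1 ≤ T ∧ a < pG a c p T := by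
  set d := Real.sqrt c with hddef
  have hd0 : 0 < d := Real.sqrt_pos.2 hc
  have hd2 : d^2 = c := Real.sq_sqrt hc.le
  set K : ℝ := 2*a*(a+d)/(p*c) with hKdef
  have hK0 : 0 < K := by positivity
  set T : ℝ := (K+1)^2 with hTdef
  have hT1 : (1:ℝ) ≤ T := by nlinarith
  have hT0 : (0:ℝ) < T := by linarith
  refine ⟨T, hT1, ?_⟩
  have hspos := pS_pos ha hc hT0
  have hbpos := pB_pos hp hT0
  have hs_le : pS a c T ≤ a + d*(K+1) := by
    have h1 : a^2 + c*T ≤ (a + d*(K+1))^2 := by nlinarith [mul_pos ha hd0]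
    calc pS a c T = Real.sqrt (a^2 + c*T) := rfl
      _ ≤ Real.sqrt ((a + d*(K+1))^2) := Real.sqrt_le_sqrt h1
      _ = a + d*(K+1) := Real.sqrt_sq (by positivity)
  have hB_le : pB p T ≤ 2*T := by
    unfold pB; nlinarith
  have hKc : p*c*K = 2*a*(a+d) := by
    rw [hKdef]; field_simp
  have hKcK : p*c*K*K = 2*a*(a+d)*K := by rw [hKc]
  have hcore : 2*a*(a + d*(K+1)) < p*c*T := by
    rw [hTdef]
    nlinarith [hKc, hKcK, mul_pos hp hc, mul_pos (mul_pos ha ha) hK0,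
      mul_pos ha hd0, mul_pos (mul_pos ha hd0) hK0, mul_pos ha ha]
  have hsB : pS a c T * pB p T ≤ (a + d*(K+1))*(2*T) :=
    mul_le_mul hs_le hB_le hbpos.le (by positivity)
  unfold pG
  rw [lt_div_iff₀ (by positivity)]
  unfold pA
  nlinarith [mul_le_mul_of_nonneg_left hsB (by positivity : (0:ℝ) ≤ 2*a),
    mul_lt_mul_of_pos_left hcore hT0, mul_pos hp (mul_pos (mul_pos ha ha) hT0),
    mul_pos hp (mul_pos ha ha)]

lemma pF_exists_strict_min {a c p : ℝ} (ha : 0 < a) (hc : 0 < c) (hp : 0 < p) (hp1 : p ≤ 1) :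
    ∃ φ₀ ∈ Set.Ici (1:ℝ), ∀ ψ ∈ Set.Ici (1:ℝ), ψ ≠ φ₀ → pF a c p φ₀ < pF a c p ψ := by
  have monoG := pG_strictMonoOn ha hc hp
  have hderiv : ∀ x : ℝ, 0 < x → deriv (pF a c p) x
      = pB p x * (pG a c p x - a) / (2*x*Real.sqrt x) := fun x hx =>
    (hasDerivAt_pF ha hc hp hx).deriv
  by_cases hcase : a ≤ pG a c p 1
  · -- minimum at 1
    have hmono : StrictMonoOn (pF a c p) (Set.Ici 1) := by
      apply strictMonoOn_of_deriv_pos (convex_Ici 1) (pF_contOn ha hc hp)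
      intro x hx
      rw [interior_Ici] at hx
      have hx1 : (1:ℝ) < x := hx
      have hx0 : (0:ℝ) < x := lt_trans one_pos hx1
      rw [hderiv x hx0]
      have hGa : a < pG a c p x :=
        lt_of_le_of_lt hcase (monoG Set.self_mem_Ici hx1.le hx1)
      have := pB_pos hp hx0
      have hsx : 0 < Real.sqrt x := Real.sqrt_pos.2 hx0
      apply div_pos (mul_pos ‹0 < pB p x› (by linarith)) (by positivity)
    refine ⟨1, Set.self_mem_Ici, fun ψ hψ hne => ?_⟩
    exact hmono Set.self_mem_Ici hψ (lt_of_le_of_ne hψ (Ne.symm hne))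
  · push_neg at hcase
    obtain ⟨T, hT1, hTa⟩ := pG_exists_big ha hc hp hp1
    have hsub := intermediate_value_Icc hT1 ((pG_contOn ha hc hp).mono
      (Set.Icc_subset_Ici_self))
    obtain ⟨φ₀, hφ₀mem, hφ₀⟩ := hsub ⟨hcase.le, hTa.le⟩
    have h1φ : 1 < φ₀ := by
      rcases lt_or_eq_of_le hφ₀mem.1 with h | h
      · exact h
      · exfalso; rw [← h] at hφ₀; rw [hφ₀] at hcase; exact lt_irrefl a hcase
    have hφ₀0 : (0:ℝ) < φ₀ := lt_trans one_pos h1φ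
    have hanti : StrictAntiOn (pF a c p) (Set.Icc 1 φ₀) := by
      apply strictAntiOn_of_deriv_neg (convex_Icc 1 φ₀)
        ((pF_contOn ha hc hp).mono Set.Icc_subset_Ici_self)
      intro x hx
      rw [interior_Icc] at hx
      have hx0 : (0:ℝ) < x := lt_trans one_pos hx.1
      rw [hderiv x hx0]
      have hGa : pG a c p x < a := by
        have := monoG (le_of_lt hx.1) (le_of_lt h1φ) hx.2
        rwa [hφ₀] at this
      have hB := pB_pos hp hx0
      have hsx : 0 < Real.sqrt x := Real.sqrt_pos.2 hx0
      exact div_neg_of_neg_of_pos (mul_neg_of_pos_of_neg hB (by linarith)) (by positivity)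
    have hmono : StrictMonoOn (pF a c p) (Set.Ici φ₀) := by
      apply strictMonoOn_of_deriv_pos (convex_Ici φ₀)
        ((pF_contOn ha hc hp).mono (Set.Ici_subset_Ici.2 h1φ.le))
      intro x hx
      rw [interior_Ici] at hx
      have hx1 : φ₀ < x := hx
      have hx0 : (0:ℝ) < x := lt_trans hφ₀0 hx1
      rw [hderiv x hx0]
      have hGa : a < pG a c p x := by
        have := monoG (le_of_lt h1φ) (le_trans h1φ.le hx1.le) hx1
        rwa [hφ₀] at this
      have hB := pB_pos hp hx0
      have hsx : 0 < Real.sqrt x := Real.sqrt_pos.2 hx0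
      exact div_pos (mul_pos hB (by linarith)) (by positivity)
    refine ⟨φ₀, h1φ.le, fun ψ hψ hne => ?_⟩
    rcases lt_or_gt_of_ne hne with h | h
    · exact hanti ⟨hψ, h.le⟩ ⟨h1φ.le, le_refl φ₀⟩ h
    · exact hmono (le_refl φ₀) h.le h

/-- For β > 0, σ₀ > 0, σ_ε > 0 and p ∈ (0,1], the approximate
personalization measure f(φ) = (βσ₀/√φ)(1 − p(φ−1)/2) + √(β²σ₀²/φ + σ_ε²)·p(φ−1)/2
attains its minimum over [1,∞), and the minimizer is unique. -/
theorem personalization_unique_minimizer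
    (β σ0 σε p : ℝ) (hβ : 0 < β) (hσ0 : 0 < σ0) (hσε : 0 < σε)
    (hp : p ∈ Set.Ioc (0:ℝ) 1)
    (f : ℝ → ℝ)
    (hf : ∀ φ, 1 ≤ φ → f φ = β*σ0/Real.sqrt φ * (1 - p*(φ-1)/2)
        + Real.sqrt (β^2*σ0^2/φ + σε^2) * (p*(φ-1)/2)) :
    ∃! φ₀, φ₀ ∈ Set.Ici (1:ℝ) ∧ IsMinOn f (Set.Ici 1) φ₀ := by
  obtain ⟨hp0, hp1⟩ := hp
  have ha : 0 < β*σ0 := mul_pos hβ hσ0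
  have hc : 0 < σε^2 := by positivity
  have hfF : ∀ φ ∈ Set.Ici (1:ℝ), f φ = pF (β*σ0) (σε^2) p φ := by
    intro φ hφ
    rw [hf φ hφ]
    unfold pF
    rw [show β^2*σ0^2 = (β*σ0)^2 by ring]
  obtain ⟨φ₀, hmem, hstrict⟩ := pF_exists_strict_min ha hc hp0 hp1
  refine ⟨φ₀, ⟨hmem, ?_⟩, ?_⟩
  · intro x hx
    simp only [Set.mem_setOf_eq]
    rw [hfF φ₀ hmem, hfF x hx]
    by_cases hne : x = φ₀
    · rw [hne]
    · exact (hstrict x hx hne).le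
  · rintro ψ ⟨hψmem, hψmin⟩
    by_contra hne
    have h1 := hstrict ψ hψmem hne
    have h2 : f ψ ≤ f φ₀ := hψmin hmem
    rw [hfF ψ hψmem, hfF φ₀ hmem] at h2
    linarith
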